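/- Suppose f : Δ = [a,b] × [c,d] → ℝ is convex on the co-ordinates and integrable, and define H(t,s) = (1/((b-a)(d-c))) ∫_a^b ∫_c^d f(tx + (1-t)(a+b)/2, sy + (1-s)(c+d)/2) dx dy. Then H is monotonically nondecreasing on the co-ordinates on [0,1]²: for fixed s, t ↦ H(t,s) is nondecreasing, and for fixed t, s ↦ H(t,s) is nondecreasing. -/

import Mathlib

open MeasureTheory

def CoordConvexOn (a b c d : ℝ) (f : ℝ → ℝ → ℝ) : Prop :=
  (∀ y ∈ Set.Icc c d, ConvexOn ℝ (Set.Icc a b) (fun x => f x y)) ∧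
  (∀ x ∈ Set.Icc a b, ConvexOn ℝ (Set.Icc c d) (fun y => f x y))

/-- The Dragomir mapping `H` associated to `f` on `[a,b] × [c,d]`. -/
noncomputable def Hmap (a b c d : ℝ) (f : ℝ → ℝ → ℝ) (t s : ℝ) : ℝ :=
  (1 / ((b - a) * (d - c))) *
    ∫ x in a..b, ∫ y in c..d,
      f (t * x + (1 - t) * (a + b) / 2) (s * y + (1 - s) * (c + d) / 2)

lemma aff_mem {a b t x : ℝ} (hab : a ≤ b) (ht : t ∈ Set.Icc (0:ℝ) 1)
    (hx : x ∈ Set.Icc a b) : t * x + (1 - t) * (a + b) / 2 ∈ Set.Icc a b := by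
  obtain ⟨ht0, ht1⟩ := ht; obtain ⟨hx1, hx2⟩ := hx
  constructor <;> nlinarith

lemma convexOn_comp_affine {a b : ℝ} {g : ℝ → ℝ} (hg : ConvexOn ℝ (Set.Icc a b) g)
    (p q : ℝ) (hmap : ∀ x ∈ Set.Icc a b, p * x + q ∈ Set.Icc a b) :
    ConvexOn ℝ (Set.Icc a b) (fun x => g (p * x + q)) := by
  refine ⟨convex_Icc a b, fun x hx y hy α β hα hβ hαβ => ?_⟩
  simp only [smul_eq_mul]
  have h : p * (α * x + β * y) + q = α * (p * x + q) + β * (p * y + q) := by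
    linear_combination (-q) * hαβ
  rw [h]
  have := hg.2 (hmap x hx) (hmap y hy) hα hβ hαβ
  simpa using this

lemma convexOn_intervalIntegrable {a b : ℝ} (hab : a ≤ b) {g : ℝ → ℝ}
    (hg : ConvexOn ℝ (Set.Icc a b) g) : IntervalIntegrable g volume a b := by
  rw [intervalIntegrable_iff_integrableOn_Icc_of_le hab]
  have hup : ∀ u ∈ Set.Icc a b, g u ≤ max (g a) (g b) := by
    intro u hu
    exact hg.le_on_segment (Set.left_mem_Icc.2 hab) (Set.right_mem_Icc.2 hab)
      ((segment_eq_Icc hab) ▸ hu)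
  have hlow : ∀ u ∈ Set.Icc a b,
      2 * g ((a + b) / 2) - max (g a) (g b) ≤ g u := by
    intro u hu
    have hu' : a + b - u ∈ Set.Icc a b := by
      obtain ⟨h1, h2⟩ := hu; constructor <;> linarith
    have h2 := hg.2 hu hu' (by norm_num : (0:ℝ) ≤ 1/2) (by norm_num : (0:ℝ) ≤ 1/2)
      (by norm_num)
    have harg : (1/2 : ℝ) • u + (1/2 : ℝ) • (a + b - u) = (a + b) / 2 := by
      simp only [smul_eq_mul]; ring
    rw [harg] at h2
    have := hup _ hu'
    simp only [smul_eq_mul] at h2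
    linarith
  have hbound : ∀ u ∈ Set.Icc a b, ‖g u‖ ≤
      |max (g a) (g b)| + |2 * g ((a + b) / 2) - max (g a) (g b)| := by
    intro u hu
    rw [Real.norm_eq_abs, abs_le]
    constructor
    · have h0 := hlow u hu
      have h1 := abs_nonneg (max (g a) (g b))
      have h2 := neg_abs_le (2 * g ((a + b) / 2) - max (g a) (g b))
      linarith
    · have h0 := hup u hu
      have h1 := le_abs_self (max (g a) (g b))
      have h2 := abs_nonneg (2 * g ((a + b) / 2) - max (g a) (g b))
      linarith
  have hmeas : AEStronglyMeasurable g (volume.restrict (Set.Ioo a b)) := by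
    have hc : ContinuousOn g (Set.Ioo a b) := by
      have := hg.continuousOn_interior
      rwa [interior_Icc] at this
    exact hc.aestronglyMeasurable measurableSet_Ioo
  have hIoo : IntegrableOn g (Set.Ioo a b) volume := by
    refine Integrable.mono' (integrable_const
      (|max (g a) (g b)| + |2 * g ((a + b) / 2) - max (g a) (g b)|)) hmeas ?_
    filter_upwards [ae_restrict_mem measurableSet_Ioo] with u hu
    exact hbound u (Set.Ioo_subset_Icc_self hu)
  exact hIoo.congr_set_ae Ioo_ae_eq_Icc.symm

lemma key_mono {a b : ℝ} (hab : a < b) {g : ℝ → ℝ} (hg : ConvexOn ℝ (Set.Icc a b) g)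
    {t₁ t₂ : ℝ} (ht₁ : t₁ ∈ Set.Icc (0:ℝ) 1) (ht₂ : t₂ ∈ Set.Icc (0:ℝ) 1) (h12 : t₁ ≤ t₂) :
    (∫ x in a..b, g (t₁ * x + (1 - t₁) * (a + b) / 2)) ≤
      ∫ x in a..b, g (t₂ * x + (1 - t₂) * (a + b) / 2) := by
  rcases eq_or_lt_of_le ht₂.1 with h0 | h0
  · have ht10 : t₁ = 0 := le_antisymm (h0 ▸ h12) ht₁.1
    rw [ht10, ← h0]
  -- t₂ > 0 case
  set lam : ℝ := (t₂ + t₁) / (2 * t₂) with hlam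
  set mu : ℝ := (t₂ - t₁) / (2 * t₂) with hmu
  have ht2ne : t₂ ≠ 0 := ne_of_gt h0
  have hlam0 : 0 ≤ lam := by
    apply div_nonneg <;> [linarith [ht₁.1]; linarith]
  have hmu0 : 0 ≤ mu := by
    apply div_nonneg <;> linarith
  have hsum : lam + mu = 1 := by
    rw [hlam, hmu, ← add_div, div_eq_one_iff_eq (mul_ne_zero two_ne_zero ht2ne)]; ring
  -- the three integrands are convex hence integrable
  have hmap1 : ∀ x ∈ Set.Icc a b, t₁ * x + (1 - t₁) * (a + b) / 2 ∈ Set.Icc a b :=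
    fun x hx => aff_mem hab.le ht₁ hx
  have hmap2 : ∀ x ∈ Set.Icc a b, t₂ * x + (1 - t₂) * (a + b) / 2 ∈ Set.Icc a b :=
    fun x hx => aff_mem hab.le ht₂ hx
  have I1 : IntervalIntegrable (fun x => g (t₁ * x + (1 - t₁) * (a + b) / 2)) volume a b :=
    convexOn_intervalIntegrable hab.le (convexOn_comp_affine hg _ _ hmap1)
  have I2 : IntervalIntegrable (fun x => g (t₂ * x + (1 - t₂) * (a + b) / 2)) volume a b :=
    convexOn_intervalIntegrable hab.le (convexOn_comp_affine hg _ _ hmap2)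
  have I3 : IntervalIntegrable (fun x => g (t₂ * (a + b - x) + (1 - t₂) * (a + b) / 2))
      volume a b := by
    have := (I2.comp_sub_left (a + b)).symm
    have he1 : a + b - a = b := by ring
    have he2 : a + b - b = a := by ring
    rw [he1, he2] at this
    exact this
  -- pointwise convexity inequality
  have hpt : ∀ x ∈ Set.Icc a b,
      g (t₁ * x + (1 - t₁) * (a + b) / 2) ≤
        lam * g (t₂ * x + (1 - t₂) * (a + b) / 2) +
          mu * g (t₂ * (a + b - x) + (1 - t₂) * (a + b) / 2) := by
    intro x hx
    have hx' : a + b - x ∈ Set.Icc a b := by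
      obtain ⟨h1, h2⟩ := hx; constructor <;> linarith
    have harg : lam • (t₂ * x + (1 - t₂) * (a + b) / 2) +
        mu • (t₂ * (a + b - x) + (1 - t₂) * (a + b) / 2) =
        t₁ * x + (1 - t₁) * (a + b) / 2 := by
      simp only [smul_eq_mul, hlam, hmu]
      field_simp
      ring
    have h2 := hg.2 (hmap2 x hx) (aff_mem hab.le ht₂ hx') hlam0 hmu0 hsum
    rw [harg] at h2
    simpa using h2
  -- reflection identity
  have hrefl : (∫ x in a..b, g (t₂ * (a + b - x) + (1 - t₂) * (a + b) / 2)) =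
      ∫ x in a..b, g (t₂ * x + (1 - t₂) * (a + b) / 2) := by
    have := intervalIntegral.integral_comp_sub_left (a := a) (b := b)
      (fun z => g (t₂ * z + (1 - t₂) * (a + b) / 2)) (a + b)
    have he1 : a + b - a = b := by ring
    have he2 : a + b - b = a := by ring
    rw [he1, he2] at this
    exact this
  calc (∫ x in a..b, g (t₁ * x + (1 - t₁) * (a + b) / 2))
      ≤ ∫ x in a..b, (lam * g (t₂ * x + (1 - t₂) * (a + b) / 2) +
          mu * g (t₂ * (a + b - x) + (1 - t₂) * (a + b) / 2)) := by
        exact intervalIntegral.integral_mono_on hab.le I1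
          ((I2.const_mul lam).add (I3.const_mul mu)) hpt
    _ = lam * (∫ x in a..b, g (t₂ * x + (1 - t₂) * (a + b) / 2)) +
          mu * (∫ x in a..b, g (t₂ * (a + b - x) + (1 - t₂) * (a + b) / 2)) := by
        rw [intervalIntegral.integral_add (I2.const_mul lam) (I3.const_mul mu),
          intervalIntegral.integral_const_mul, intervalIntegral.integral_const_mul]
    _ = (lam + mu) * ∫ x in a..b, g (t₂ * x + (1 - t₂) * (a + b) / 2) := by
        rw [hrefl]; ring
    _ = ∫ x in a..b, g (t₂ * x + (1 - t₂) * (a + b) / 2) := by rw [hsum, one_mul]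

lemma G_convex {a b c d : ℝ} (hab : a < b) (hcd : c < d) (f : ℝ → ℝ → ℝ)
    (hf : CoordConvexOn a b c d f) {s : ℝ} (hs : s ∈ Set.Icc (0:ℝ) 1) :
    ConvexOn ℝ (Set.Icc a b)
      (fun u => ∫ y in c..d, f u (s * y + (1 - s) * (c + d) / 2)) := by
  have hmapy : ∀ y ∈ Set.Icc c d, s * y + (1 - s) * (c + d) / 2 ∈ Set.Icc c d :=
    fun y hy => aff_mem hcd.le hs hy
  have hint : ∀ w ∈ Set.Icc a b,
      IntervalIntegrable (fun y => f w (s * y + (1 - s) * (c + d) / 2)) volume c d := by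
    intro w hw
    exact convexOn_intervalIntegrable hcd.le
      (convexOn_comp_affine (hf.2 w hw) _ _ hmapy)
  refine ⟨convex_Icc a b, fun u hu v hv α β hα hβ hαβ => ?_⟩
  simp only [smul_eq_mul]
  have hw0 : α * u + β * v ∈ Set.Icc a b := by
    obtain ⟨hu1, hu2⟩ := hu; obtain ⟨hv1, hv2⟩ := hv
    constructor
    · have h1 := add_le_add (mul_le_mul_of_nonneg_left hu1 hα)
        (mul_le_mul_of_nonneg_left hv1 hβ)
      have h2 : α * a + β * a = a := by linear_combination a * hαβ
      linarith
    · have h1 := add_le_add (mul_le_mul_of_nonneg_left hu2 hα)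
        (mul_le_mul_of_nonneg_left hv2 hβ)
      have h2 : α * b + β * b = b := by linear_combination b * hαβ
      linarith
  have hpt : ∀ y ∈ Set.Icc c d,
      f (α * u + β * v) (s * y + (1 - s) * (c + d) / 2) ≤
        α * f u (s * y + (1 - s) * (c + d) / 2) +
          β * f v (s * y + (1 - s) * (c + d) / 2) := by
    intro y hy
    have := (hf.1 _ (hmapy y hy)).2 hu hv hα hβ hαβ
    simpa using this
  calc (∫ y in c..d, f (α * u + β * v) (s * y + (1 - s) * (c + d) / 2))
      ≤ ∫ y in c..d, (α * f u (s * y + (1 - s) * (c + d) / 2) +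
          β * f v (s * y + (1 - s) * (c + d) / 2)) := by
        exact intervalIntegral.integral_mono_on hcd.le (hint _ hw0)
          (((hint _ hu).const_mul α).add ((hint _ hv).const_mul β)) hpt
    _ = α * (∫ y in c..d, f u (s * y + (1 - s) * (c + d) / 2)) +
          β * (∫ y in c..d, f v (s * y + (1 - s) * (c + d) / 2)) := by
        rw [intervalIntegral.integral_add ((hint _ hu).const_mul α)
          ((hint _ hv).const_mul β), intervalIntegral.integral_const_mul,
          intervalIntegral.integral_const_mul]

theorem stmt15 (a b c d : ℝ) (hab : a < b) (hcd : c < d) (f : ℝ → ℝ → ℝ)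
    (hf : CoordConvexOn a b c d f)
    (hint : IntegrableOn (fun q : ℝ × ℝ => f q.1 q.2) (Set.Icc a b ×ˢ Set.Icc c d)) :
    (∀ s ∈ Set.Icc (0:ℝ) 1, ∀ t₁ ∈ Set.Icc (0:ℝ) 1, ∀ t₂ ∈ Set.Icc (0:ℝ) 1,
        t₁ ≤ t₂ → Hmap a b c d f t₁ s ≤ Hmap a b c d f t₂ s) ∧
    (∀ t ∈ Set.Icc (0:ℝ) 1, ∀ s₁ ∈ Set.Icc (0:ℝ) 1, ∀ s₂ ∈ Set.Icc (0:ℝ) 1,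
        s₁ ≤ s₂ → Hmap a b c d f t s₁ ≤ Hmap a b c d f t s₂) := by
  have hba : (0:ℝ) < b - a := sub_pos.2 hab
  have hdc : (0:ℝ) < d - c := sub_pos.2 hcd
  have hpos : (0:ℝ) ≤ 1 / ((b - a) * (d - c)) := by positivity
  constructor
  · intro s hs t₁ ht₁ t₂ ht₂ h12
    have hG := G_convex hab hcd f hf hs
    have key := key_mono hab hG ht₁ ht₂ h12
    unfold Hmap
    exact mul_le_mul_of_nonneg_left key hpos
  · intro t ht s₁ hs₁ s₂ hs₂ h12
    unfold Hmap
    refine mul_le_mul_of_nonneg_left ?_ hpos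
    have hmapx : ∀ x ∈ Set.Icc a b, t * x + (1 - t) * (a + b) / 2 ∈ Set.Icc a b :=
      fun x hx => aff_mem hab.le ht hx
    have J : ∀ s' ∈ Set.Icc (0:ℝ) 1, IntervalIntegrable
        (fun x => ∫ y in c..d,
          f (t * x + (1 - t) * (a + b) / 2) (s' * y + (1 - s') * (c + d) / 2)) volume a b := by
      intro s' hs'
      exact convexOn_intervalIntegrable hab.le
        (convexOn_comp_affine (G_convex hab hcd f hf hs') _ _ hmapx)
    refine intervalIntegral.integral_mono_on hab.le (J s₁ hs₁) (J s₂ hs₂) ?_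
    intro x hx
    exact key_mono hcd (hf.2 _ (hmapx x hx)) hs₁ hs₂ h12
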